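/- Let (X,d) be a UC quasi-metric space whose forward topology is T₁ and normal. Then for any two nonempty disjoint closed subsets A and B of (X,d), d(A,B) > 0. -/
import Mathlib


open Filter Topology Set

structure IsQuasiMetric {X : Type*} (d : X → X → ℝ) : Prop where
  nonneg : ∀ x y, 0 ≤ d x y
  refl : ∀ x, d x x = 0
  eq_of_both_zero : ∀ x y, d x y = 0 → d y x = 0 → x = y
  triangle : ∀ x y z, d x y ≤ d x z + d z y

/-- The forward topology generated by forward balls `B⁺(x,ε) = {y | d x y < ε}`. -/
def forwardTopology {X : Type*} (d : X → X → ℝ) : TopologicalSpace X :=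
  TopologicalSpace.generateFrom {S | ∃ x : X, ∃ ε : ℝ, 0 < ε ∧ S = {y | d x y < ε}}

/-- `s` forward converges to `x`: `d x (s n) → 0`. -/
def ForwardConv {X : Type*} (d : X → X → ℝ) (s : ℕ → X) (x : X) : Prop :=
  ∀ ε > (0:ℝ), ∃ N : ℕ, ∀ n ≥ N, d x (s n) < ε

/-- `s` backward converges to `x`: `d (s n) x → 0`. -/
def BackwardConv {X : Type*} (d : X → X → ℝ) (s : ℕ → X) (x : X) : Prop :=
  ∀ ε > (0:ℝ), ∃ N : ℕ, ∀ n ≥ N, d (s n) x < ε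

/-- `x` is a cluster point of `s`: some subsequence forward converges to `x`. -/
def IsClusterPointOf {X : Type*} (d : X → X → ℝ) (s : ℕ → X) (x : X) : Prop :=
  ∃ φ : ℕ → ℕ, StrictMono φ ∧ ForwardConv d (s ∘ φ) x

def LeftKCauchy {X : Type*} (d : X → X → ℝ) (s : ℕ → X) : Prop :=
  ∀ ε > (0:ℝ), ∃ n₀ : ℕ, ∀ k n : ℕ, n₀ ≤ k → k ≤ n → d (s k) (s n) < ε

/-- `s` is forward parallel to `t`. -/
def ForwardParallel {X : Type*} (d : X → X → ℝ) (s t : ℕ → X) : Prop :=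
  ∀ ε > (0:ℝ), ∃ N : ℕ, ∀ n ≥ N, d (s n) (t n) < ε

/-- Forward continuity for real-valued functions (ε-δ form). -/
def ForwardContinuous {X : Type*} (d : X → X → ℝ) (f : X → ℝ) : Prop :=
  ∀ x₀ : X, ∀ ε > (0:ℝ), ∃ δ > (0:ℝ), ∀ y, d x₀ y < δ → |f x₀ - f y| < ε

/-- Uniform continuity for real-valued functions. -/
def UniformlyCont {X : Type*} (d : X → X → ℝ) (f : X → ℝ) : Prop :=
  ∀ ε > (0:ℝ), ∃ δ > (0:ℝ), ∀ x y, d x y < δ → |f x - f y| < ε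

/-- `(X,d)` is a UC quasi-metric space. -/
def IsUC {X : Type*} (d : X → X → ℝ) : Prop :=
  ∀ f : X → ℝ, ForwardContinuous d f → UniformlyCont d f

/-- Distance between two sets: `inf {d a b | a ∈ A, b ∈ B}`. -/
noncomputable def setDist {X : Type*} (d : X → X → ℝ) (A B : Set X) : ℝ :=
  sInf {r : ℝ | ∃ a ∈ A, ∃ b ∈ B, d a b = r}


lemma forward_ball_subset_of_open {X : Type*} {d : X → X → ℝ} (hd : IsQuasiMetric d)
    {U : Set X}
    (hU : TopologicalSpace.GenerateOpen {S | ∃ x : X, ∃ ε : ℝ, 0 < ε ∧ S = {y | d x y < ε}} U) :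
    ∀ x₀ ∈ U, ∃ δ > (0:ℝ), ∀ y, d x₀ y < δ → y ∈ U := by
  induction hU with
  | basic S hS =>
    obtain ⟨x, ε, hε, rfl⟩ := hS
    intro x₀ hx₀
    refine ⟨ε - d x x₀, by simpa using hx₀, fun y hy => ?_⟩
    have := hd.triangle x y x₀
    simp only [Set.mem_setOf_eq] at *
    linarith
  | univ => exact fun x₀ _ => ⟨1, one_pos, fun y _ => trivial⟩
  | inter S T _ _ ihS ihT =>
    intro x₀ hx₀
    obtain ⟨δ₁, hδ₁, h₁⟩ := ihS x₀ hx₀.1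
    obtain ⟨δ₂, hδ₂, h₂⟩ := ihT x₀ hx₀.2
    exact ⟨min δ₁ δ₂, lt_min hδ₁ hδ₂, fun y hy =>
      ⟨h₁ y (lt_of_lt_of_le hy (min_le_left _ _)), h₂ y (lt_of_lt_of_le hy (min_le_right _ _))⟩⟩
  | sUnion 𝒮 _ ih =>
    intro x₀ hx₀
    obtain ⟨S, hS, hx₀S⟩ := hx₀
    obtain ⟨δ, hδ, h⟩ := ih S hS x₀ hx₀S
    exact ⟨δ, hδ, fun y hy => ⟨S, hS, h y hy⟩⟩

lemma forwardContinuous_of_continuous {X : Type*} {d : X → X → ℝ} (hd : IsQuasiMetric d)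
    {f : X → ℝ} (hf : @Continuous X ℝ (forwardTopology d) _ f) :
    ForwardContinuous d f := by
  letI : TopologicalSpace X := forwardTopology d
  intro x₀ ε hε
  have hUopen : @IsOpen X (forwardTopology d) (f ⁻¹' Set.Ioo (f x₀ - ε) (f x₀ + ε)) :=
    hf.isOpen_preimage _ isOpen_Ioo
  have hx₀ : x₀ ∈ f ⁻¹' Set.Ioo (f x₀ - ε) (f x₀ + ε) := by
    simp [hε]
  obtain ⟨δ, hδ, h⟩ := forward_ball_subset_of_open hd hUopen x₀ hx₀
  refine ⟨δ, hδ, fun y hy => ?_⟩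
  have := h y hy
  simp only [Set.mem_preimage, Set.mem_Ioo] at this
  rw [abs_sub_lt_iff]
  constructor <;> linarith

/-- in a T₁, normal, UC quasi-metric space, disjoint nonempty closed sets are
at positive distance. -/
theorem isUC_pos_dist_closed {X : Type*} (d : X → X → ℝ) (hd : IsQuasiMetric d)
    (hT1 : @T1Space X (forwardTopology d))
    (hN : @NormalSpace X (forwardTopology d))
    (hUC : IsUC d)
    (A B : Set X) (hA : A.Nonempty) (hB : B.Nonempty)
    (hAc : @IsClosed X (forwardTopology d) A) (hBc : @IsClosed X (forwardTopology d) B)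
    (hAB : Disjoint A B) :
    0 < setDist d A B := by
  letI : TopologicalSpace X := forwardTopology d
  haveI := hT1
  haveI := hN
  obtain ⟨f, hfA, hfB, _⟩ := exists_continuous_zero_one_of_isClosed hAc hBc hAB
  have hfc : ForwardContinuous d f := forwardContinuous_of_continuous hd f.continuous
  obtain ⟨δ, hδ, hu⟩ := hUC f hfc 1 one_pos
  have key : ∀ a ∈ A, ∀ b ∈ B, δ ≤ d a b := by
    intro a ha b hb
    by_contra h
    push_neg at h
    have := hu a b h
    rw [hfA ha, hfB hb] at this
    norm_num at this
  refine lt_of_lt_of_le hδ (le_csInf ?_ ?_)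
  · obtain ⟨a, ha⟩ := hA
    obtain ⟨b, hb⟩ := hB
    exact ⟨d a b, a, ha, b, hb, rfl⟩
  · rintro r ⟨a, ha, b, hb, rfl⟩
    exact key a ha b hb
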